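/- arXiv:1506.04485 — 2 statements merged into one kernel-verified Lean document; each statement's English description precedes it below -/
import Mathlib

section
/- Markov's theorem (upper bound restated combinatorially): if d(F) ≤ 2^k − 1 for a system F of Boolean functions, then F can be computed by a circuit over the basis of all monotone Boolean functions together with negation, using at most k negation gates. In particular, I(F) ≤ ⌈log₂(d(F)+1)⌉ where I(F) denotes the minimum number of negations. -/
open Classical in
/-- Number of jumps (1→0 drops of some member of `F`) between consecutive
elements of a list of Boolean tuples. -/
noncomputable def jumps {k : ℕ} (F : Finset ((Fin k → Bool) → Bool)) :
    List (Fin k → Bool) → ℕ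
  | a :: b :: t =>
      (if ∃ f ∈ F, f a = true ∧ f b = false then 1 else 0) + jumps F (b :: t)
  | _ => 0

/-- Number of value changes of `h` between consecutive elements of a list. -/
def changes {k : ℕ} (h : (Fin k → Bool) → Bool) :
    List (Fin k → Bool) → ℕ
  | a :: b :: t => (if h a ≠ h b then 1 else 0) + changes h (b :: t)
  | _ => 0

/-- An increasing chain of pairwise distinct tuples (coordinatewise order). -/
def IsIncChain {k : ℕ} (l : List (Fin k → Bool)) : Prop :=
  l.Chain' (· ≤ ·) ∧ l.Pairwise (· ≠ ·)

/-- The decrease `d(F)` of a system of Boolean functions: the maximum number of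
jumps over all increasing chains. -/
noncomputable def decrease {k : ℕ} (F : Finset ((Fin k → Bool) → Bool)) : ℕ :=
  sSup {m | ∃ l, IsIncChain l ∧ jumps F l = m}

/-- The decrease `d(f)` of a single Boolean function. -/
noncomputable def decrease1 {k : ℕ} (f : (Fin k → Bool) → Bool) : ℕ :=
  decrease {f}
/-- A Boolean circuit over the basis consisting of all monotone Boolean
functions (weight 0) together with the non-monotone basis functions from `Ω`
(weight 1).  Gate `i` may read the `n` inputs and all previous gate values. -/
structure Circuit (n : ℕ) (Ω : Set (Σ m : ℕ, (Fin m → Bool) → Bool)) where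
  size : ℕ
  gate : (i : Fin size) → ((Fin (n + i) → Bool) → Bool)
  nonmono : Finset (Fin size)
  mono_ok : ∀ i, i ∉ nonmono → Monotone (gate i)
  basis_ok : ∀ i ∈ nonmono, ∃ ω ∈ Ω, ∃ sel : Fin ω.1 → Fin (n + i),
      gate i = fun v => ω.2 (fun j => v (sel j))

/-- The value carried by wire `j` of the circuit (wires `0,…,n-1` are the
inputs, wire `n+i` is the output of gate `i`). -/
def Circuit.wire {n : ℕ} {Ω : Set (Σ m : ℕ, (Fin m → Bool) → Bool)}
    (C : Circuit n Ω) (x : Fin n → Bool) (j : ℕ) : Bool :=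
  if h : j < n then x ⟨j, h⟩
  else if h2 : j - n < C.size then
    C.gate ⟨j - n, h2⟩ (fun t => C.wire x t.val)
  else false
termination_by j
decreasing_by
  have ht := t.isLt
  simp only [not_lt] at h
  simp at ht
  omega

/-- The circuit `C` computes the system `F` if every member of `F` appears on
some wire of `C`. -/
def Circuit.Computes {n : ℕ} {Ω : Set (Σ m : ℕ, (Fin m → Bool) → Bool)}
    (C : Circuit n Ω) (F : Finset ((Fin n → Bool) → Bool)) : Prop :=
  ∀ f ∈ F, ∃ o : ℕ, o < n + C.size ∧ ∀ x, f x = C.wire x o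

/-- The inversion complexity `I_B(F)`: the minimal number of non-monotone
(weight-1) gates in a circuit over the basis computing the system `F`. -/
noncomputable def invCompl (n : ℕ) (Ω : Set (Σ m : ℕ, (Fin m → Bool) → Bool))
    (F : Finset ((Fin n → Bool) → Bool)) : ℕ :=
  sInf {k | ∃ C : Circuit n Ω, C.Computes F ∧ C.nonmono.card = k}

/-- The basis `{¬}`: negation as the unique weight-1 basis function. -/
def negBasis : Set (Σ m : ℕ, (Fin m → Bool) → Bool) :=
  {⟨1, fun v => !(v 0)⟩}

section MarkovAux

open Classical

variable {n : ℕ}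

private lemma decideMono {P Q : Prop} [Decidable P] [Decidable Q] (h : P → Q) :
    decide P ≤ decide Q := by
  by_cases hP : P
  · simp [hP, h hP]
  · simp [hP]

private def wt (x : Fin n → Bool) : ℕ :=
  (Finset.univ.filter (fun i => x i = true)).card

private lemma wt_le (x : Fin n → Bool) : wt x ≤ n := by
  have := Finset.card_filter_le (Finset.univ : Finset (Fin n)) (fun i => x i = true)
  simpa [wt] using this

private lemma wt_lt {x y : Fin n → Bool} (h : x < y) : wt x < wt y := by
  have hle : x ≤ y := le_of_lt h
  have hne : x ≠ y := ne_of_lt h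
  apply Finset.card_lt_card
  have hsub : Finset.univ.filter (fun i => x i = true) ⊆
      Finset.univ.filter (fun i => y i = true) := by
    intro i hi
    simp only [Finset.mem_filter, Finset.mem_univ, true_and] at hi ⊢
    have h1 := hle i
    rw [hi] at h1
    revert h1; cases y i <;> simp
  rw [Finset.ssubset_iff_of_subset hsub]
  obtain ⟨i, hi⟩ : ∃ i, x i ≠ y i := by
    by_contra hc
    push_neg at hc
    exact hne (funext hc)
  refine ⟨i, ?_, ?_⟩ <;> simp only [Finset.mem_filter, Finset.mem_univ, true_and]
  · have h1 := hle i; revert h1 hi; cases x i <;> cases y i <;> simp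
  · intro hx; apply hi; rw [hx]
    have h1 := hle i; rw [hx] at h1; revert h1; cases y i <;> simp

private lemma incChain_iff {l : List (Fin n → Bool)} :
    IsIncChain l ↔ l.Pairwise (· < ·) := by
  unfold IsIncChain
  rw [show l.Chain' (· ≤ ·) ↔ l.IsChain (· ≤ ·) from Iff.rfl, List.isChain_iff_pairwise]
  constructor
  · rintro ⟨h1, h2⟩
    exact (h1.and h2).imp fun h => lt_of_le_of_ne h.1 h.2
  · intro h
    exact ⟨h.imp le_of_lt, h.imp ne_of_lt⟩

variable (F : Finset ((Fin n → Bool) → Bool))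

private noncomputable def dropN (a b : Fin n → Bool) : ℕ :=
  if ∃ f ∈ F, f a = true ∧ f b = false then 1 else 0

private lemma jumps_cons₂ (a b : Fin n → Bool) (t : List (Fin n → Bool)) :
    jumps F (a :: b :: t) = dropN F a b + jumps F (b :: t) := rfl

private lemma jumps_single (a : Fin n → Bool) : jumps F [a] = 0 := rfl

private lemma jumps_nil : jumps F [] = 0 := rfl

private lemma jumps_le : ∀ (l : List (Fin n → Bool)) (a),
    (a :: l).Pairwise (· < ·) → jumps F (a :: l) + wt a ≤ n := by
  intro l
  induction l with
  | nil => intro a _; simpa [jumps_single] using wt_le a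
  | cons b t ih =>
    intro a hp
    have hab : a < b := (List.pairwise_cons.mp hp).1 b (by simp)
    have h2 := ih b (List.pairwise_cons.mp hp).2
    have hw := wt_lt hab
    rw [jumps_cons₂]
    have hd : dropN F a b ≤ 1 := by unfold dropN; split <;> omega
    omega

private lemma jumps_le' {l : List (Fin n → Bool)} (h : IsIncChain l) : jumps F l ≤ n := by
  rcases l with _ | ⟨a, l⟩
  · simp [jumps_nil]
  · have := jumps_le F l a (incChain_iff.mp h); omega

private noncomputable def mfun (x : Fin n → Bool) : ℕ :=
  sSup {j | ∃ l, IsIncChain (l ++ [x]) ∧ jumps F (l ++ [x]) = j}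

private lemma mfun_bdd (x : Fin n → Bool) :
    BddAbove {j | ∃ l, IsIncChain (l ++ [x]) ∧ jumps F (l ++ [x]) = j} := by
  refine ⟨n, ?_⟩
  rintro j ⟨l, hl, hj⟩
  exact hj ▸ jumps_le' F hl

private lemma mfun_nonempty (x : Fin n → Bool) :
    {j | ∃ l, IsIncChain (l ++ [x]) ∧ jumps F (l ++ [x]) = j}.Nonempty := by
  refine ⟨jumps F [x], [], ?_, by simp⟩
  rw [incChain_iff]
  simp

private lemma mfun_mem (x : Fin n → Bool) :
    ∃ l, IsIncChain (l ++ [x]) ∧ jumps F (l ++ [x]) = mfun F x :=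
  Nat.sSup_mem (mfun_nonempty F x) (mfun_bdd F x)

private lemma jumps_append (x y : Fin n → Bool) : ∀ l,
    jumps F (l ++ [x, y]) = jumps F (l ++ [x]) + dropN F x y := by
  intro l
  induction l with
  | nil => simp [jumps_cons₂, jumps_single, jumps_nil]
  | cons a l ih =>
    cases l with
    | nil => simp only [List.cons_append, List.nil_append, jumps_cons₂, jumps_single]; omega
    | cons c l' =>
      simp only [List.cons_append, jumps_cons₂] at ih ⊢
      omega

private lemma chain_extend {l : List (Fin n → Bool)} {x y : Fin n → Bool}
    (h : IsIncChain (l ++ [x])) (hxy : x < y) : IsIncChain (l ++ [x, y]) := by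
  rw [incChain_iff] at h ⊢
  have he : l ++ [x, y] = (l ++ [x]) ++ [y] := by simp
  rw [he, List.pairwise_append]
  refine ⟨h, by simp, ?_⟩
  intro a ha b hb
  simp only [List.mem_singleton] at hb; subst hb
  rcases List.mem_append.mp ha with ha | ha
  · have hax : a < x := by
      have := (List.pairwise_append.mp h).2.2 a ha x (by simp)
      exact this
    exact lt_trans hax hxy
  · simp only [List.mem_singleton] at ha; subst ha; exact hxy

private lemma mfun_mono {x y : Fin n → Bool} (h : x ≤ y) : mfun F x ≤ mfun F y := by
  rcases eq_or_lt_of_le h with rfl | hlt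
  · exact le_rfl
  apply csSup_le (mfun_nonempty F x)
  rintro j ⟨l, hl, hj⟩
  have hmem : jumps F (l ++ [x, y]) ∈
      {j | ∃ l', IsIncChain (l' ++ [y]) ∧ jumps F (l' ++ [y]) = j} := by
    refine ⟨l ++ [x], ?_, ?_⟩ <;> rw [List.append_assoc]
    · exact chain_extend hl hlt
    · rfl
  have h2 : jumps F (l ++ [x, y]) ≤ mfun F y := le_csSup (mfun_bdd F y) hmem
  rw [jumps_append] at h2
  omega

private lemma mfun_lt {x y : Fin n → Bool} {f : (Fin n → Bool) → Bool}
    (hf : f ∈ F) (hfx : f x = true) (hfy : f y = false) (h : x ≤ y) :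
    mfun F x < mfun F y := by
  have hne : x ≠ y := by rintro rfl; rw [hfx] at hfy; exact Bool.noConfusion hfy
  have hlt : x < y := lt_of_le_of_ne h hne
  obtain ⟨l, hl, hj⟩ := mfun_mem F x
  have hd : dropN F x y = 1 := if_pos ⟨f, hf, hfx, hfy⟩
  have hmem : jumps F (l ++ [x, y]) ∈
      {j | ∃ l', IsIncChain (l' ++ [y]) ∧ jumps F (l' ++ [y]) = j} := by
    refine ⟨l ++ [x], ?_, ?_⟩ <;> rw [List.append_assoc]
    · exact chain_extend hl hlt
    · rfl
  have h2 : jumps F (l ++ [x, y]) ≤ mfun F y := le_csSup (mfun_bdd F y) hmem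
  rw [jumps_append, hj, hd] at h2
  omega

private lemma mfun_le_decrease (x : Fin n → Bool) : mfun F x ≤ decrease F := by
  apply csSup_le (mfun_nonempty F x)
  rintro j ⟨l, hl, hj⟩
  apply le_csSup
  · refine ⟨n, ?_⟩
    rintro m ⟨l', hl', hm⟩
    exact hm ▸ jumps_le' F hl'
  · exact ⟨l ++ [x], hl, hj⟩

/- Nat bit lemmas -/

private lemma tb_iff (a p : ℕ) : Nat.testBit a p = true ↔ 2^p ≤ a % 2^(p+1) := by
  rw [Nat.testBit_eq_decide_div_mod_eq, decide_eq_true_eq, ← Nat.mod_mul_right_div_self, ← pow_succ]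
  have hp : (0:ℕ) < 2^p := Nat.pow_pos (by omega)
  have h1 : a % 2^(p+1) < 2^(p+1) := Nat.mod_lt _ (Nat.pow_pos (by omega))
  have h2 : a % 2^(p+1) / 2^p < 2 := by
    apply Nat.div_lt_of_lt_mul
    rw [← pow_succ]
    exact h1
  have h3 : 1 ≤ a % 2^(p+1) / 2^p ↔ 2^p ≤ a % 2^(p+1) := Nat.one_le_div_iff hp
  omega

private lemma div_step (a p : ℕ) :
    a / 2^p = (a / 2^(p+1)) * 2 + a % 2^(p+1) / 2^p := by
  have h1 : a / 2^p / 2 = a / 2^(p+1) := by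
    rw [Nat.div_div_eq_div_mul, ← pow_succ]
  have h2 : a / 2^p % 2 = a % 2^(p+1) / 2^p := by
    rw [← Nat.mod_mul_right_div_self, ← pow_succ]
  have := Nat.div_add_mod (a / 2^p) 2
  omega

private lemma mod_step (a p : ℕ) : a % 2^p = a % 2^(p+1) % 2^p :=
  (Nat.mod_mod_of_dvd a (pow_dvd_pow 2 (Nat.le_succ p))).symm

private lemma bits_eq (k : ℕ) : ∀ q, q ≤ k → ∀ a b : ℕ, a ≤ b → b < 2^k →
    (∀ j, j < q → Nat.testBit b (k-1-j) = true → Nat.testBit a (k-1-j) = true) →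
    a / 2^(k-q) = b / 2^(k-q) ∧ a % 2^(k-q) ≤ b % 2^(k-q) := by
  intro q
  induction q with
  | zero =>
    intro _ a b hab hb _
    rw [Nat.sub_zero]
    exact ⟨by rw [Nat.div_eq_of_lt (lt_of_le_of_lt hab hb), Nat.div_eq_of_lt hb],
      by rw [Nat.mod_eq_of_lt (lt_of_le_of_lt hab hb), Nat.mod_eq_of_lt hb]; exact hab⟩
  | succ q ih =>
    intro hq a b hab hb H
    obtain ⟨hdiv, hmod⟩ := ih (by omega) a b hab hb (fun j hj => H j (by omega))
    have hkq : k - q = (k - (q+1)) + 1 := by omega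
    set p := k - (q+1) with hp
    rw [hkq] at hdiv hmod
    have hbit := H q (by omega)
    rw [show k - 1 - q = p from by omega, tb_iff, tb_iff] at hbit
    have hA : a % 2^(p+1) < 2^(p+1) := Nat.mod_lt _ (Nat.pow_pos (by omega))
    have hB : b % 2^(p+1) < 2^(p+1) := Nat.mod_lt _ (Nat.pow_pos (by omega))
    have hda := div_step a p
    have hdb := div_step b p
    have hma := mod_step a p
    have hmb := mod_step b p
    have hp2 : (0:ℕ) < 2^p := Nat.pow_pos (by omega)
    have he : (2:ℕ)^(p+1) = 2^p * 2 := pow_succ 2 p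
    by_cases hc : 2^p ≤ b % 2^(p+1)
    · have hca := hbit hc
      have d1 : a % 2^(p+1) / 2^p = 1 := Nat.div_eq_of_lt_le (by omega) (by omega)
      have d2 : b % 2^(p+1) / 2^p = 1 := Nat.div_eq_of_lt_le (by omega) (by omega)
      have m1 := Nat.div_add_mod (a % 2^(p+1)) (2^p)
      have m2 := Nat.div_add_mod (b % 2^(p+1)) (2^p)
      rw [d1] at hda m1
      rw [d2] at hdb m2
      exact ⟨by omega, by omega⟩
    · have hca : a % 2^(p+1) < 2^p := by omega
      have d1 : a % 2^(p+1) / 2^p = 0 := Nat.div_eq_of_lt hca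
      have d2 : b % 2^(p+1) / 2^p = 0 := Nat.div_eq_of_lt (show b % 2^(p+1) < 2^p by omega)
      have m1 : a % 2^(p+1) % 2^p = a % 2^(p+1) := Nat.mod_eq_of_lt hca
      have m2 : b % 2^(p+1) % 2^p = b % 2^(p+1) := Nat.mod_eq_of_lt (show b % 2^(p+1) < 2^p by omega)
      rw [d1] at hda
      rw [d2] at hdb
      exact ⟨by omega, by omega⟩

private lemma bit_mono {k q a b : ℕ} (hq : q < k) (hab : a ≤ b) (hb : b < 2^k)
    (H : ∀ j, j < q → Nat.testBit b (k-1-j) = true → Nat.testBit a (k-1-j) = true)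
    (hbit : Nat.testBit a (k-1-q) = true) : Nat.testBit b (k-1-q) = true := by
  obtain ⟨-, hmod⟩ := bits_eq k q (le_of_lt hq) a b hab hb H
  rw [tb_iff] at hbit ⊢
  rw [show k - 1 - q + 1 = k - q from by omega] at hbit ⊢
  omega

private lemma bit_eq_all {k a b : ℕ} (hab : a ≤ b) (hb : b < 2^k)
    (H : ∀ j, j < k → Nat.testBit b (k-1-j) = true → Nat.testBit a (k-1-j) = true) :
    a = b := by
  obtain ⟨hdiv, -⟩ := bits_eq k k le_rfl a b hab hb H
  simpa using hdiv

/- The circuit -/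

private noncomputable def tfun (k j : ℕ) (y : Fin n → Bool) : Bool :=
  !(Nat.testBit (mfun F y) (k - 1 - j))

private noncomputable def outf (j : ℕ) : (Fin n → Bool) → Bool :=
  if h : j < F.card then ((F.equivFin.symm ⟨j, h⟩ : {g // g ∈ F}) : (Fin n → Bool) → Bool)
  else fun _ => false

private noncomputable def mkC (k : ℕ) : Circuit n negBasis where
  size := 2 * k + F.card
  gate i v :=
    if hlt : (i : ℕ) < 2 * k then
      if hpar : (i : ℕ) % 2 = 0 then
        decide (∃ y : Fin n → Bool,
          (∀ r : Fin n, y r ≤ v ⟨r.1, Nat.lt_of_lt_of_le r.isLt (Nat.le_add_right n _)⟩) ∧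
          (∀ j : ℕ, (hj : 2*j+1 < (i:ℕ)) → tfun F k j y ≤ v ⟨n + (2*j+1), by omega⟩) ∧
          Nat.testBit (mfun F y) (k - 1 - (i:ℕ)/2) = true)
      else !(v ⟨n + ((i:ℕ) - 1), by omega⟩)
    else
      decide (∃ y : Fin n → Bool,
        (∀ r : Fin n, y r ≤ v ⟨r.1, Nat.lt_of_lt_of_le r.isLt (Nat.le_add_right n _)⟩) ∧
        (∀ j : ℕ, (hj : 2*j+1 < 2*k) → tfun F k j y ≤ v ⟨n + (2*j+1), by omega⟩) ∧
        outf F ((i:ℕ) - 2*k) y = true)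
  nonmono := Finset.univ.image fun q : Fin k =>
    (⟨2*(q:ℕ)+1, by have := q.isLt; omega⟩ : Fin (2*k + F.card))
  mono_ok := by
    intro i hi v w hvw
    by_cases hlt : (i:ℕ) < 2*k
    · by_cases hpar : (i:ℕ) % 2 = 0
      · simp only [dif_pos hlt, dif_pos hpar]
        refine decideMono ?_
        rintro ⟨y, h1, h2, h3⟩
        exact ⟨y, fun r => le_trans (h1 r) (hvw _), fun j hj => le_trans (h2 j hj) (hvw _), h3⟩
      · exfalso; apply hi
        refine Finset.mem_image.mpr ⟨⟨(i:ℕ)/2, by omega⟩, Finset.mem_univ _, ?_⟩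
        apply Fin.ext
        simp only [Fin.val_mk]
        omega
    · simp only [dif_neg hlt]
      refine decideMono ?_
      rintro ⟨y, h1, h2, h3⟩
      exact ⟨y, fun r => le_trans (h1 r) (hvw _), fun j hj => le_trans (h2 j hj) (hvw _), h3⟩
  basis_ok := by
    intro i hi
    obtain ⟨q, -, hq⟩ := Finset.mem_image.mp hi
    have hiv : (i:ℕ) = 2*(q:ℕ)+1 := by rw [← hq]
    have hlt : (i:ℕ) < 2*k := by have := q.isLt; omega
    have hpar : ¬ ((i:ℕ) % 2 = 0) := by omega
    refine ⟨⟨1, fun v => !(v 0)⟩, rfl, fun _ => ⟨n + ((i:ℕ) - 1), by omega⟩, ?_⟩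
    funext v
    simp only [dif_pos hlt, dif_neg hpar]


private lemma wire_input {Ω} (C : Circuit n Ω) (x : Fin n → Bool) (j : ℕ) (hj : j < n) :
    C.wire x j = x ⟨j, hj⟩ := by
  rw [Circuit.wire, dif_pos hj]

private lemma bool_not_le {u v : Bool} (h : (!u) ≤ (!v)) : v = true → u = true := by
  revert h; cases u <;> cases v <;> simp

private lemma wire_at {Ω} (C : Circuit n Ω) (x : Fin n → Bool) (j : ℕ)
    (h1 : ¬ j < n) (h2 : j - n < C.size) :
    C.wire x j = C.gate ⟨j - n, h2⟩ (fun t => C.wire x t.val) := by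
  rw [Circuit.wire, dif_neg h1, dif_pos h2]

private lemma mkC_gate_even (k q : ℕ) (hq : q < k) (h2 : 2*q < (mkC F k).size)
    (v : Fin (n + 2*q) → Bool) :
    (mkC F k).gate ⟨2*q, h2⟩ v =
      decide (∃ y : Fin n → Bool,
        (∀ r : Fin n, y r ≤ v ⟨r.1, Nat.lt_of_lt_of_le r.isLt (Nat.le_add_right n _)⟩) ∧
        (∀ j : ℕ, (hj : 2*j+1 < 2*q) → tfun F k j y ≤ v ⟨n + (2*j+1), by omega⟩) ∧
        Nat.testBit (mfun F y) (k - 1 - q) = true) := by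
  dsimp only [mkC]
  rw [dif_pos (show 2*q < 2*k by omega), dif_pos (Nat.mul_mod_right 2 q)]
  rw [show 2*q/2 = q from by omega]

private lemma mkC_gate_odd (k q : ℕ) (hq : q < k) (h2 : 2*q+1 < (mkC F k).size)
    (v : Fin (n + (2*q+1)) → Bool) :
    (mkC F k).gate ⟨2*q+1, h2⟩ v = !(v ⟨n + 2*q, by omega⟩) := by
  dsimp only [mkC]
  rw [dif_pos (show 2*q+1 < 2*k by omega), dif_neg (show ¬ (2*q+1) % 2 = 0 by omega)]
  simp only [Nat.add_sub_cancel]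

private lemma mkC_gate_out (k j : ℕ) (h2 : 2*k + j < (mkC F k).size)
    (v : Fin (n + (2*k+j)) → Bool) :
    (mkC F k).gate ⟨2*k+j, h2⟩ v =
      decide (∃ y : Fin n → Bool,
        (∀ r : Fin n, y r ≤ v ⟨r.1, Nat.lt_of_lt_of_le r.isLt (Nat.le_add_right n _)⟩) ∧
        (∀ j' : ℕ, (hj : 2*j'+1 < 2*k) → tfun F k j' y ≤ v ⟨n + (2*j'+1), by omega⟩) ∧
        outf F j y = true) := by
  dsimp only [mkC]
  rw [dif_neg (show ¬ (2*k+j < 2*k) by omega)]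
  rw [show 2*k+j-2*k = j from by omega]

private lemma wire_eval (k : ℕ) (hm : ∀ z, mfun F z < 2^k) (x : Fin n → Bool) :
    ∀ q, q < k →
      (mkC F k).wire x (n + 2*q) = Nat.testBit (mfun F x) (k-1-q) ∧
      (mkC F k).wire x (n + (2*q+1)) = !(Nat.testBit (mfun F x) (k-1-q)) := by
  intro q
  induction q using Nat.strong_induction_on with
  | _ q ih =>
  intro hq
  have heven : (mkC F k).wire x (n + 2*q) = Nat.testBit (mfun F x) (k-1-q) := by
    have hsub : n + 2*q - n < (mkC F k).size := by show _ < 2*k + F.card; omega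
    rw [wire_at _ x (n+2*q) (by omega) hsub]
    rw [show (⟨n+2*q-n, hsub⟩ : Fin (mkC F k).size) =
        ⟨2*q, by show 2*q < 2*k + F.card; omega⟩ from
        Fin.ext (Nat.add_sub_cancel_left n (2*q))]
    rw [mkC_gate_even F k q hq]
    rcases htb : Nat.testBit (mfun F x) (k-1-q) with _ | _
    · rw [decide_eq_false_iff_not]
      rintro ⟨y, hy1, hy2, hy3⟩
      have hyx : y ≤ x := by
        intro r
        have h1 : y r ≤ (mkC F k).wire x r.1 := hy1 r
        rwa [wire_input _ x _ r.isLt, Fin.eta] at h1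
      have hcond : ∀ j, j < q → Nat.testBit (mfun F x) (k-1-j) = true →
          Nat.testBit (mfun F y) (k-1-j) = true := by
        intro j hjq hbx
        have h1 : tfun F k j y ≤ (mkC F k).wire x (n + (2*j+1)) := hy2 j (by omega)
        rw [(ih j hjq (by omega)).2] at h1
        exact bool_not_le h1 hbx
      have := bit_mono hq (mfun_mono F hyx) (hm x) hcond hy3
      rw [htb] at this
      exact Bool.noConfusion this
    · rw [decide_eq_true_eq]
      refine ⟨x, fun r => ?_, fun j hj => ?_, htb⟩
      · show x r ≤ (mkC F k).wire x r.1
        rw [wire_input _ x _ r.isLt, Fin.eta]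
      · show tfun F k j x ≤ (mkC F k).wire x (n + (2*j+1))
        rw [(ih j (by omega) (by omega)).2]
        exact le_of_eq rfl
  refine ⟨heven, ?_⟩
  have hsub : n + (2*q+1) - n < (mkC F k).size := by show _ < 2*k + F.card; omega
  rw [wire_at _ x (n+(2*q+1)) (by omega) hsub]
  rw [show (⟨n+(2*q+1)-n, hsub⟩ : Fin (mkC F k).size) =
      ⟨2*q+1, by show 2*q+1 < 2*k + F.card; omega⟩ from
      Fin.ext (Nat.add_sub_cancel_left n (2*q+1))]
  rw [mkC_gate_odd F k q hq]
  show (!((mkC F k).wire x (n + 2*q))) = _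
  rw [heven]

private lemma wire_out (k : ℕ) (hm : ∀ z, mfun F z < 2^k) (x : Fin n → Bool)
    (j : ℕ) (hjc : j < F.card) :
    (mkC F k).wire x (n + (2*k + j)) = outf F j x := by
  have hsub : n + (2*k+j) - n < (mkC F k).size := by show _ < 2*k + F.card; omega
  rw [wire_at _ x (n+(2*k+j)) (by omega) hsub]
  rw [show (⟨n+(2*k+j)-n, hsub⟩ : Fin (mkC F k).size) =
      ⟨2*k+j, by show 2*k+j < 2*k + F.card; omega⟩ from
      Fin.ext (Nat.add_sub_cancel_left n (2*k+j))]
  rw [mkC_gate_out F k j]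
  rcases hfx : outf F j x with _ | _
  · rw [decide_eq_false_iff_not]
    rintro ⟨y, hy1, hy2, hy3⟩
    have hyx : y ≤ x := by
      intro r
      have h1 : y r ≤ (mkC F k).wire x r.1 := hy1 r
      rwa [wire_input _ x _ r.isLt, Fin.eta] at h1
    have hcond : ∀ j', j' < k → Nat.testBit (mfun F x) (k-1-j') = true →
        Nat.testBit (mfun F y) (k-1-j') = true := by
      intro j' hjk hbx
      have h1 : tfun F k j' y ≤ (mkC F k).wire x (n + (2*j'+1)) := hy2 j' (by omega)
      rw [(wire_eval F k hm x j' hjk).2] at h1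
      exact bool_not_le h1 hbx
    have heq : mfun F y = mfun F x := bit_eq_all (mfun_mono F hyx) (hm x) hcond
    have hmem : outf F j ∈ F := by
      rw [outf, dif_pos hjc]
      exact (F.equivFin.symm ⟨j, hjc⟩).2
    have := mfun_lt F hmem hy3 hfx hyx
    omega
  · rw [decide_eq_true_eq]
    refine ⟨x, fun r => ?_, fun j' hj' => ?_, hfx⟩
    · show x r ≤ (mkC F k).wire x r.1
      rw [wire_input _ x _ r.isLt, Fin.eta]
    · show tfun F k j' x ≤ (mkC F k).wire x (n + (2*j'+1))
      rw [(wire_eval F k hm x j' (by omega)).2]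
      exact le_of_eq rfl

private lemma mkC_card (k : ℕ) : (mkC F k).nonmono.card = k := by
  have hinj : Function.Injective (fun q : Fin k =>
      (⟨2*(q:ℕ)+1, by have := q.isLt; omega⟩ : Fin (2*k + F.card))) := by
    intro a b hab
    have h := congrArg Fin.val hab
    simp only at h
    exact Fin.ext (by omega)
  have hn : (mkC F k).nonmono = Finset.univ.image (fun q : Fin k =>
      (⟨2*(q:ℕ)+1, by have := q.isLt; omega⟩ : Fin (2*k + F.card))) := rfl
  rw [hn]; exact (Finset.card_image_of_injective _ hinj).trans (Finset.card_fin k)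

private lemma mkC_computes (k : ℕ) (h : decrease F ≤ 2^k - 1) :
    (mkC F k).Computes F := by
  have hm : ∀ z, mfun F z < 2^k := by
    intro z
    have h1 := mfun_le_decrease F z
    have h2 : (0:ℕ) < 2^k := Nat.pow_pos (by omega)
    omega
  intro f hf
  refine ⟨n + (2*k + (F.equivFin ⟨f, hf⟩ : Fin F.card).1), ?_, ?_⟩
  · have := (F.equivFin ⟨f, hf⟩ : Fin F.card).isLt
    show _ < n + (2*k + F.card)
    omega
  intro x
  rw [wire_out F k hm x _ (F.equivFin ⟨f, hf⟩ : Fin F.card).isLt]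
  rw [outf, dif_pos (F.equivFin ⟨f, hf⟩ : Fin F.card).isLt]
  have he : F.equivFin.symm ⟨(F.equivFin ⟨f, hf⟩ : Fin F.card).1,
      (F.equivFin ⟨f, hf⟩ : Fin F.card).isLt⟩ = ⟨f, hf⟩ := by
    rw [Fin.eta]
    exact Equiv.symm_apply_apply _ _
  rw [he]

end MarkovAux

/-- Markov's theorem, upper bound: if `d(F) ≤ 2^k − 1` then `F`
is computable by a circuit over monotone functions plus negation using at most
`k` negation gates; in particular `I(F) ≤ ⌈log₂(d(F)+1)⌉`. -/
theorem stmt10 (n : ℕ) (F : Finset ((Fin n → Bool) → Bool)) :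
    (∀ k : ℕ, decrease F ≤ 2 ^ k - 1 →
      ∃ C : Circuit n negBasis, C.Computes F ∧ C.nonmono.card ≤ k) ∧
    invCompl n negBasis F ≤ Nat.clog 2 (decrease F + 1) := by
  constructor
  · intro k hk
    exact ⟨mkC F k, mkC_computes F k hk, le_of_eq (mkC_card F k)⟩
  · have hdk : decrease F ≤ 2 ^ Nat.clog 2 (decrease F + 1) - 1 := by
      have := Nat.le_pow_clog (show (1:ℕ) < 2 by omega) (decrease F + 1)
      omega
    apply Nat.sInf_le
    exact ⟨mkC F (Nat.clog 2 (decrease F + 1)),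
      mkC_computes F _ hdk, mkC_card F _⟩
end

section
/- If every function computable with zero weighted gates is monotone (d = 0 for negation-free circuits) and each non-monotone basis function ω satisfies d(ω) ≤ r, then any system F computable by a circuit over the basis with t non-monotone gates satisfies d(F) ≤ (2r + 1)(2^t − 1). -/
section Aux
variable {k : ℕ}

lemma jumps_le_length (F : Finset ((Fin k → Bool) → Bool)) :
    ∀ (b : Fin k → Bool) (t : List (Fin k → Bool)), jumps F (b :: t) ≤ t.length := by
  intro b t
  induction t generalizing b with
  | nil => simp [jumps]
  | cons c t ih =>
    rw [jumps]
    have := ih c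
    split <;> simp <;> omega

/-- weight of a boolean tuple -/
def bweight (x : Fin k → Bool) : ℕ := (Finset.univ.filter (fun i => x i = true)).card

lemma bweight_lt {x y : Fin k → Bool} (hle : x ≤ y) (hne : x ≠ y) :
    bweight x < bweight y := by
  apply Finset.card_lt_card
  constructor
  · intro i hi
    simp only [Finset.mem_filter, Finset.mem_univ, true_and] at hi ⊢
    have := hle i
    rw [hi] at this
    exact (Bool.le_iff_imp.mp this) rfl
  · intro hsub
    apply hne
    funext i
    by_cases hy : y i = true
    · have hmem : i ∈ Finset.univ.filter (fun j => y j = true) := by simp [hy]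
      have : x i = true := by
        have := hsub hmem
        simpa using this
      rw [this, hy]
    · simp only [Bool.not_eq_true] at hy
      have := hle i
      rw [hy] at this
      revert this
      cases hxv : x i <;> simp [hy]

lemma incChain_pairwise_lt {l : List (Fin k → Bool)} (hl : IsIncChain l) :
    l.Pairwise (· < ·) := by
  obtain ⟨hch, hpw⟩ := hl
  have h1 : l.Pairwise (· ≤ ·) := List.isChain_iff_pairwise.mp hch
  exact (h1.and hpw).imp (fun h => lt_of_le_of_ne h.1 h.2)

lemma incChain_length {l : List (Fin k → Bool)} (hl : IsIncChain l) :
    l.length ≤ k + 1 := by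
  have hlt := incChain_pairwise_lt hl
  have hmap : (l.map bweight).Pairwise (· < ·) :=
    hlt.map bweight (fun a b h => bweight_lt h.le h.ne)
  have hnd : (l.map bweight).Nodup := hmap.imp (fun h => ne_of_lt h)
  have hsub : (l.map bweight).toFinset ⊆ Finset.range (k + 1) := by
    intro m hm
    simp only [List.mem_toFinset, List.mem_map] at hm
    obtain ⟨x, _, rfl⟩ := hm
    simp only [Finset.mem_range]
    have : bweight x ≤ k := by
      have := Finset.card_filter_le Finset.univ (fun i => x i = true)
      simpa [bweight] using this
    omega
  calc l.length = (l.map bweight).length := (List.length_map _).symm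
    _ = (l.map bweight).toFinset.card := (List.toFinset_card_of_nodup hnd).symm
    _ ≤ (Finset.range (k+1)).card := Finset.card_le_card hsub
    _ = k + 1 := Finset.card_range _

lemma jumps_le_decrease (F : Finset ((Fin k → Bool) → Bool))
    {l : List (Fin k → Bool)} (hl : IsIncChain l) : jumps F l ≤ decrease F := by
  apply le_csSup
  · refine ⟨k + 1, ?_⟩
    rintro m ⟨l', hl', rfl⟩
    rcases l' with _ | ⟨b, t⟩
    · simp [jumps]
    · have h1 := jumps_le_length F b t
      have h2 := incChain_length hl'
      simp at h2
      omega
  · exact ⟨l, hl, rfl⟩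

lemma decrease_le (F : Finset ((Fin k → Bool) → Bool)) {m : ℕ}
    (h : ∀ l, IsIncChain l → jumps F l ≤ m) : decrease F ≤ m := by
  apply csSup_le'
  rintro a ⟨l, hl, rfl⟩
  exact h l hl

end Aux
section Aux2
variable {k : ℕ}

lemma jumps_cons_cons (F : Finset ((Fin k → Bool) → Bool)) (a b : Fin k → Bool)
    (t : List (Fin k → Bool)) :
    jumps F (a :: b :: t) =
      (if ∃ f ∈ F, f a = true ∧ f b = false then 1 else 0) + jumps F (b :: t) := by
  rw [jumps]

lemma changes_le_jumps (h : (Fin k → Bool) → Bool) :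
    ∀ (t : List (Fin k → Bool)) (a : Fin k → Bool),
      changes h (a :: t) ≤ 2 * jumps {h} (a :: t) + 1 := by
  have key : ∀ (t : List (Fin k → Bool)) (a : Fin k → Bool),
      changes h (a :: t) ≤ 2 * jumps {h} (a :: t) + (if h a = false then 1 else 0) := by
    intro t
    induction t with
    | nil => intro a; simp [changes, jumps]
    | cons b t ih =>
      intro a
      have hb := ih b
      rw [changes, jumps_cons_cons]
      cases ha : h a <;> cases hbv : h b <;>
        simp [ha, hbv] at hb ⊢ <;> omega
  intro t a
  have := key t a
  split at this <;> omega

lemma jumps_map {m : ℕ} (g : (Fin m → Bool) → Bool) (u : (Fin k → Bool) → (Fin m → Bool)) :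
    ∀ (t : List (Fin k → Bool)) (a : Fin k → Bool),
      jumps {fun x => g (u x)} (a :: t) = jumps {g} ((a :: t).map u) := by
  intro t
  induction t with
  | nil => intro a; simp [jumps]
  | cons b t ih =>
    intro a
    rw [jumps_cons_cons, List.map_cons, List.map_cons, jumps_cons_cons]
    rw [← List.map_cons, ih b]
    simp

lemma jumps_destutter (f : (Fin k → Bool) → Bool) :
    ∀ (t : List (Fin k → Bool)) (a : Fin k → Bool), List.Chain' (· ≤ ·) (a :: t) →
      ∃ m', m'.Chain' (· < ·) ∧ m'.head? = some a ∧
        jumps {f} (a :: t) = jumps {f} m' := by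
  intro t
  induction t with
  | nil =>
    intro a _
    exact ⟨[a], List.isChain_singleton a, rfl, rfl⟩
  | cons b t ih =>
    intro a hch
    have hab : a ≤ b := (List.isChain_cons_cons.mp hch).1
    have htail : List.Chain' (· ≤ ·) (b :: t) := (List.isChain_cons_cons.mp hch).2
    obtain ⟨m', hm'lt, hm'hd, hm'j⟩ := ih b htail
    by_cases hab2 : a = b
    · refine ⟨m', hm'lt, ?_, ?_⟩
      · rw [hm'hd, hab2]
      · rw [jumps_cons_cons, hm'j.symm, hab2]
        simp [jumps]
    · rcases m' with _ | ⟨c, rest⟩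
      · simp at hm'hd
      · obtain rfl : c = b := by simpa using hm'hd
        refine ⟨a :: c :: rest, ?_, rfl, ?_⟩
        · exact List.isChain_cons_cons.mpr ⟨lt_of_le_of_ne hab hab2, hm'lt⟩
        · rw [jumps_cons_cons, jumps_cons_cons, hm'j]

lemma jumps_single_le_decrease1 (f : (Fin k → Bool) → Bool)
    {m : List (Fin k → Bool)} (hm : m.Chain' (· ≤ ·)) :
    jumps {f} m ≤ decrease1 f := by
  rcases m with _ | ⟨a, t⟩
  · simp [jumps, decrease1]
  · obtain ⟨m', hm'lt, _, hm'j⟩ := jumps_destutter f t a hm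
    rw [hm'j]
    have hpw : m'.Pairwise (· < ·) := List.isChain_iff_pairwise.mp hm'lt
    exact jumps_le_decrease {f} ⟨hpw.isChain.imp (fun a b h => le_of_lt h),
      hpw.imp (fun h => ne_of_lt h)⟩

lemma jumps_eq_zero_of_monotone (F : Finset ((Fin k → Bool) → Bool))
    (hmono : ∀ f ∈ F, Monotone f) :
    ∀ (l : List (Fin k → Bool)), l.Chain' (· ≤ ·) → jumps F l = 0 := by
  intro l
  induction l with
  | nil => intro _; simp [jumps]
  | cons a t ih =>
    intro hch
    rcases t with _ | ⟨b, t⟩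
    · simp [jumps]
    · rw [jumps_cons_cons]
      have h2 := ih (List.isChain_cons_cons.mp hch).2
      have hab : a ≤ b := (List.isChain_cons_cons.mp hch).1
      rw [if_neg, h2]
      rintro ⟨f, hf, hfa, hfb⟩
      have := hmono f hf hab
      rw [hfa, hfb] at this
      exact absurd this (by simp)

lemma wire_mono {n : ℕ} {Ω : Set (Σ m : ℕ, (Fin m → Bool) → Bool)}
    (C : Circuit n Ω) (J : ℕ)
    (hm : ∀ i : Fin C.size, n + (i : ℕ) < J → Monotone (C.gate i)) :
    ∀ j < J, Monotone (fun x => C.wire x j) := by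
  intro j
  induction j using Nat.strong_induction_on with
  | _ j ih =>
    intro hj x y hxy
    show C.wire x j ≤ C.wire y j
    rw [Circuit.wire]
    conv_rhs => rw [Circuit.wire]
    split_ifs with h1 h2
    · exact hxy _
    · refine hm ⟨j - n, h2⟩ (by omega : n + (j - n) < J) ?_
      intro t
      have h3 : (t : ℕ) < n + (j - n) := t.isLt
      have ht : (t : ℕ) < j := by omega
      exact ih t ht (lt_trans ht hj) hxy
    · exact le_refl _

end Aux2
section Lift
variable {n : ℕ} {Ω : Set (Σ m : ℕ, (Fin m → Bool) → Bool)}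

/-- index embedding: wire `j` of `C` corresponds to wire `embIdx n j` of the
lifted circuit (which has one extra input, at position `n`). -/
def embIdx (n j : ℕ) : ℕ := if j < n then j else j + 1

lemma embIdx_lt {i j : ℕ} (h : j < n + i) : embIdx n j < n + 1 + i := by
  unfold embIdx; split <;> omega

/-- extend an input tuple by one extra coordinate `y` at position `n`. -/
def ext (x : Fin n → Bool) (y : Bool) : Fin (n + 1) → Bool :=
  fun j => if hj : (j : ℕ) < n then x ⟨j, hj⟩ else y

lemma ext_mono {x x' : Fin n → Bool} (y : Bool) (h : x ≤ x') : ext x y ≤ ext x' y := by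
  intro j
  unfold ext
  split
  · exact h _
  · exact le_refl _

lemma ext_inj {x x' : Fin n → Bool} {y : Bool} (h : ext x y = ext x' y) : x = x' := by
  funext i
  have := congrFun h ⟨i, by omega⟩
  simpa [ext, i.isLt] using this

/-- the lifted circuit: gate `i₀` is replaced by a projection onto the new
input `y`, everything else is reindexed. -/
def liftC (C : Circuit n Ω) (i₀ : Fin C.size) : Circuit (n + 1) Ω where
  size := C.size
  gate := fun i v =>
    if i = i₀ then v ⟨n, by omega⟩
    else C.gate i (fun j => v ⟨embIdx n j, embIdx_lt j.isLt⟩)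
  nonmono := C.nonmono.erase i₀
  mono_ok := by
    intro i hi
    by_cases h : i = i₀
    · simp only [h, if_pos rfl]
      intro v w hvw
      exact hvw _
    · have hnm : i ∉ C.nonmono := by
        intro hmem
        exact hi (Finset.mem_erase.mpr ⟨h, hmem⟩)
      simp only [if_neg h]
      intro v w hvw
      exact C.mono_ok i hnm (fun j => hvw _)
  basis_ok := by
    intro i hi
    obtain ⟨hne, hmem⟩ := Finset.mem_erase.mp hi
    obtain ⟨ω, hω, sel, hsel⟩ := C.basis_ok i hmem
    refine ⟨ω, hω, fun j => ⟨embIdx n (sel j), embIdx_lt (sel j).isLt⟩, ?_⟩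
    funext v
    simp only [if_neg hne, hsel]

lemma lift_wire (C : Circuit n Ω) (i₀ : Fin C.size) (x : Fin n → Bool) :
    ∀ j, (liftC C i₀).wire (ext x (C.wire x (n + (i₀ : ℕ)))) (embIdx n j)
      = C.wire x j := by
  intro j
  induction j using Nat.strong_induction_on with
  | _ j ih =>
    by_cases h1 : j < n
    · have he : embIdx n j = j := if_pos h1
      rw [he, Circuit.wire]
      conv_rhs => rw [Circuit.wire]
      rw [dif_pos (show j < n + 1 by omega), dif_pos h1]
      simp [ext, h1]
    · have he : embIdx n j = j + 1 := if_neg h1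
      by_cases h2 : j - n < C.size
      · rw [he, Circuit.wire]
        rw [dif_neg (show ¬ j + 1 < n + 1 by omega)]
        have hsz : j + 1 - (n + 1) < (liftC C i₀).size := by
          show j + 1 - (n + 1) < C.size; omega
        rw [dif_pos hsz]
        conv_rhs => rw [Circuit.wire]
        rw [dif_neg h1, dif_pos h2]
        have hidx : (⟨j + 1 - (n + 1), hsz⟩ : Fin (liftC C i₀).size) = ⟨j - n, h2⟩ :=
          Fin.ext (show j + 1 - (n + 1) = j - n by omega)
        rw [hidx]
        by_cases h3 : j - n = (i₀ : ℕ)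
        · have hi : (⟨j - n, h2⟩ : Fin C.size) = i₀ := Fin.ext h3
          have hrhs : C.gate ⟨j - n, h2⟩ (fun t => C.wire x t.val)
              = C.wire x (n + (i₀ : ℕ)) := by
            conv_rhs => rw [Circuit.wire]
            rw [dif_neg (show ¬ n + (i₀ : ℕ) < n by omega),
              dif_pos (show n + (i₀ : ℕ) - n < C.size by have := i₀.isLt; omega)]
            have hidx2 : (⟨n + (i₀ : ℕ) - n, by have := i₀.isLt; omega⟩ : Fin C.size)
                = ⟨j - n, h2⟩ := Fin.ext (show n + (i₀ : ℕ) - n = j - n by omega)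
            rw [hidx2]
          show (liftC C i₀).gate ⟨j - n, h2⟩ _ = _
          simp only [liftC, if_pos hi]
          rw [hrhs]
          show (liftC C i₀).wire (ext x (C.wire x (n + (i₀ : ℕ)))) n
              = C.wire x (n + (i₀ : ℕ))
          rw [Circuit.wire, dif_pos (show n < n + 1 by omega)]
          rw [ext]
          rw [dif_neg (show ¬ ((⟨n, by omega⟩ : Fin (n + 1)) : ℕ) < n by simp)]
        · have hi : (⟨j - n, h2⟩ : Fin C.size) ≠ i₀ := by
            intro hc
            exact h3 (by simpa using congrArg Fin.val hc)
          show (liftC C i₀).gate ⟨j - n, h2⟩ _ = _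
          simp only [liftC, if_neg hi]
          congr 1
          funext j2
          have h4 : (j2 : ℕ) < n + (j - n) := j2.isLt
          have hj2 : (j2 : ℕ) < j := by omega
          exact ih _ hj2
      · rw [he, Circuit.wire]
        conv_rhs => rw [Circuit.wire]
        rw [dif_neg (show ¬ j + 1 < n + 1 by omega), dif_neg h1, dif_neg h2,
          dif_neg (show ¬ j + 1 - (n + 1) < (liftC C i₀).size by
            show ¬ j + 1 - (n + 1) < C.size; omega)]

lemma lift_nonmono_card (C : Circuit n Ω) (i₀ : Fin C.size) (h : i₀ ∈ C.nonmono) :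
    (liftC C i₀).nonmono.card = C.nonmono.card - 1 := by
  show (C.nonmono.erase i₀).card = _
  rw [Finset.card_erase_of_mem h]

end Lift
section Split
variable {n : ℕ}

lemma jumps_le_cons {k : ℕ} (F : Finset ((Fin k → Bool) → Bool))
    (a : Fin k → Bool) (m : List (Fin k → Bool)) :
    jumps F m ≤ jumps F (a :: m) := by
  rcases m with _ | ⟨b, t⟩
  · simp [jumps]
  · rw [jumps_cons_cons]
    exact Nat.le_add_left _ _

/-- projection of a chain onto the sub-chain where `h = c`, lifted by `ext · c`. -/
def projc (h : (Fin n → Bool) → Bool) (c : Bool) (l : List (Fin n → Bool)) :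
    List (Fin (n + 1) → Bool) :=
  (l.filter (fun x => h x == c)).map (fun x => ext x c)

lemma projc_cons (h : (Fin n → Bool) → Bool) (c : Bool) (a : Fin n → Bool)
    (l : List (Fin n → Bool)) :
    projc h c (a :: l) = if h a = c then ext a c :: projc h c l else projc h c l := by
  by_cases hac : h a = c <;> simp [projc, List.filter_cons, hac]

lemma projc_ge (F' : Finset ((Fin (n + 1) → Bool) → Bool))
    (h : (Fin n → Bool) → Bool) (c : Bool) (a : Fin n → Bool)
    (l : List (Fin n → Bool)) :
    jumps F' (projc h c l) ≤ jumps F' (projc h c (a :: l)) := by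
  rw [projc_cons]
  split
  · exact jumps_le_cons _ _ _
  · exact le_refl _

lemma jumps_split (F : Finset ((Fin n → Bool) → Bool))
    (F' : Finset ((Fin (n + 1) → Bool) → Bool)) (h : (Fin n → Bool) → Bool)
    (hcorr : ∀ f ∈ F, ∃ g ∈ F', ∀ x, g (ext x (h x)) = f x) :
    ∀ (t : List (Fin n → Bool)) (a : Fin n → Bool),
      jumps F (a :: t) ≤
        jumps F' (projc h false (a :: t)) + jumps F' (projc h true (a :: t))
          + changes h (a :: t) := by
  intro t
  induction t with
  | nil => intro a; simp [jumps]
  | cons b t ih =>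
    intro a
    have H := ih b
    rw [jumps_cons_cons, changes]
    have hbr : ∀ c : Bool, h a = c → h b = c →
        (if ∃ f ∈ F, f a = true ∧ f b = false then 1 else 0)
          ≤ (if ∃ g ∈ F', g (ext a c) = true ∧ g (ext b c) = false then 1 else 0) := by
      intro c hac hbc
      have himp : (∃ f ∈ F, f a = true ∧ f b = false) →
          ∃ g ∈ F', g (ext a c) = true ∧ g (ext b c) = false := by
        rintro ⟨f, hf, hfa, hfb⟩
        obtain ⟨g, hg, hgx⟩ := hcorr f hf
        refine ⟨g, hg, ?_, ?_⟩
        · have h5 := hgx a; rw [hac] at h5; rw [h5, hfa]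
        · have h5 := hgx b; rw [hbc] at h5; rw [h5, hfb]
      split_ifs with h1 h2
      · exact le_refl _
      · exact absurd (himp h1) h2
      · exact Nat.zero_le _
      · exact Nat.zero_le _
    have hjc : ∀ c : Bool, h a = c → h b = c →
        jumps F' (projc h c (b :: t))
            + (if ∃ g ∈ F', g (ext a c) = true ∧ g (ext b c) = false then 1 else 0)
          = jumps F' (projc h c (a :: b :: t)) := by
      intro c hac hbc
      have e0 : projc h c (a :: b :: t) = ext a c :: projc h c (b :: t) := by
        rw [projc_cons, if_pos hac]
      have e0' : projc h c (b :: t) = ext b c :: projc h c t := by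
        rw [projc_cons, if_pos hbc]
      rw [e0, e0', jumps_cons_cons, ← e0']
      exact Nat.add_comm _ _
    by_cases hsame : h a = h b
    · have hch : (if h a ≠ h b then 1 else 0) = 0 := by simp [hsame]
      rw [hch]
      cases hbv : h b
      · have hav : h a = false := by rw [hsame, hbv]
        have hj := hjc false hav hbv
        have hb2 := hbr false hav hbv
        have hoth := projc_ge F' h true a (b :: t)
        generalize (if ∃ f ∈ F, f a = true ∧ f b = false then 1 else 0) = A at hb2 ⊢
        generalize (if ∃ g ∈ F', g (ext a false) = true ∧ g (ext b false) = false
          then 1 else 0) = B at hb2 hj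
        omega
      · have hav : h a = true := by rw [hsame, hbv]
        have hj := hjc true hav hbv
        have hb2 := hbr true hav hbv
        have hoth := projc_ge F' h false a (b :: t)
        generalize (if ∃ f ∈ F, f a = true ∧ f b = false then 1 else 0) = A at hb2 ⊢
        generalize (if ∃ g ∈ F', g (ext a true) = true ∧ g (ext b true) = false
          then 1 else 0) = B at hb2 hj
        omega
    · have hch : (if h a ≠ h b then 1 else 0) = 1 := by simp [hsame]
      rw [hch]
      have hbr1 : (if ∃ f ∈ F, f a = true ∧ f b = false then 1 else 0) ≤ 1 := by
        split
        · exact le_refl _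
        · exact Nat.zero_le _
      have h0 := projc_ge F' h false a (b :: t)
      have h1 := projc_ge F' h true a (b :: t)
      generalize (if ∃ f ∈ F, f a = true ∧ f b = false then 1 else 0) = A at hbr1 ⊢
      omega

end Split
section Main

lemma projc_incChain {n : ℕ} (h : (Fin n → Bool) → Bool) (c : Bool)
    {l : List (Fin n → Bool)} (hl : IsIncChain l) : IsIncChain (projc h c l) := by
  obtain ⟨hch, hpw⟩ := hl
  have hple : l.Pairwise (· ≤ ·) := List.isChain_iff_pairwise.mp hch
  have hsub : (l.filter (fun x => h x == c)).Sublist l := List.filter_sublist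
  have h1 : (l.filter (fun x => h x == c)).Pairwise (· ≤ ·) := hple.sublist hsub
  have h2 : (l.filter (fun x => h x == c)).Pairwise (· ≠ ·) := hpw.sublist hsub
  constructor
  · exact List.isChain_iff_pairwise.mpr (h1.map _ (fun {a b} hab => ext_mono c hab))
  · exact h2.map _ (fun {a b} hab heq => hab (ext_inj heq))

lemma main_aux (r : ℕ) (Ω : Set (Σ m : ℕ, (Fin m → Bool) → Bool))
    (hΩ : ∀ ω ∈ Ω, ¬ Monotone ω.2 ∧ decrease1 ω.2 ≤ r) :
    ∀ (t n : ℕ) (F : Finset ((Fin n → Bool) → Bool)) (C : Circuit n Ω),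
      C.Computes F → C.nonmono.card = t →
      decrease F ≤ (2 * r + 1) * (2 ^ t - 1) := by
  intro t
  induction t using Nat.strong_induction_on with
  | _ t IH =>
    intro n F C hC ht
    by_cases hne : C.nonmono.Nonempty
    · -- inductive step
      set i₀ := C.nonmono.min' hne with hi₀
      have hi₀mem : i₀ ∈ C.nonmono := C.nonmono.min'_mem hne
      have ht1 : 1 ≤ t := by
        rw [← ht]
        exact Finset.card_pos.mpr hne
      set h : (Fin n → Bool) → Bool := fun x => C.wire x (n + (i₀ : ℕ)) with hh0
      set G := liftC C i₀ with hG0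
      -- the lifted system
      set F' : Finset ((Fin (n + 1) → Bool) → Bool) :=
        F.attach.image (fun fp => fun v =>
          G.wire v (embIdx n (Classical.choose (hC fp.1 fp.2)))) with hF'
      have hcorr : ∀ f ∈ F, ∃ g ∈ F', ∀ x, g (ext x (h x)) = f x := by
        intro f hf
        refine ⟨_, Finset.mem_image_of_mem _ (Finset.mem_attach F ⟨f, hf⟩), ?_⟩
        intro x
        show G.wire (ext x (C.wire x (n + (i₀ : ℕ))))
            (embIdx n (Classical.choose (hC f hf))) = f x
        rw [lift_wire C i₀ x]
        exact ((Classical.choose_spec (hC f hf)).2 x).symm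
      have hGC : G.Computes F' := by
        intro g hg
        obtain ⟨fp, _, rfl⟩ := Finset.mem_image.mp hg
        refine ⟨embIdx n (Classical.choose (hC fp.1 fp.2)), ?_, fun v => rfl⟩
        have h1 := (Classical.choose_spec (hC fp.1 fp.2)).1
        exact embIdx_lt h1
      have hGcard : G.nonmono.card = t - 1 := by
        rw [hG0, lift_nonmono_card C i₀ hi₀mem, ht]
      have hD := IH (t - 1) (by omega) (n + 1) F' G hGC hGcard
      -- the changes bound for h
      obtain ⟨ω, hω, sel, hsel⟩ := C.basis_ok i₀ hi₀mem
      have humono : ∀ j : Fin ω.1, Monotone (fun x => C.wire x ((sel j : Fin _) : ℕ)) := by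
        intro j
        refine wire_mono C (n + (i₀ : ℕ)) ?_ _ (sel j).isLt
        intro i hi
        apply C.mono_ok
        intro hmem
        have hle := C.nonmono.min'_le i hmem
        rw [← hi₀] at hle
        rw [Fin.le_def] at hle
        omega
      have hhsel : h = fun x => ω.2 (fun j => C.wire x ((sel j : Fin _) : ℕ)) := by
        funext x
        show C.wire x (n + (i₀ : ℕ)) = _
        rw [Circuit.wire, dif_neg (show ¬ n + (i₀ : ℕ) < n by omega),
          dif_pos (show n + (i₀ : ℕ) - n < C.size by have := i₀.isLt; omega)]
        have hidx : (⟨n + (i₀ : ℕ) - n, by have := i₀.isLt; omega⟩ : Fin C.size) = i₀ :=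
          Fin.ext (show n + (i₀ : ℕ) - n = (i₀ : ℕ) by omega)
        rw [hidx, hsel]
      have hchg : ∀ l : List (Fin n → Bool), l.Chain' (· ≤ ·) →
          changes h l ≤ 2 * r + 1 := by
        intro l hl
        rcases l with _ | ⟨a, t'⟩
        · simp [changes]
        · have h1 := changes_le_jumps h t' a
          have h2 : jumps {h} (a :: t') =
              jumps {ω.2} ((a :: t').map (fun x => fun j => C.wire x ((sel j : Fin _) : ℕ))) := by
            rw [hhsel]
            exact jumps_map ω.2 _ t' a
          have h3 : ((a :: t').map
              (fun x => fun j => C.wire x ((sel j : Fin _) : ℕ))).Chain' (· ≤ ·) := by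
            show List.IsChain _ _
            rw [List.isChain_map]
            exact hl.imp (fun {x y} hxy j => humono j hxy)
          have h4 := jumps_single_le_decrease1 ω.2 h3
          have h5 := (hΩ ω hω).2
          omega
      -- final bound
      apply decrease_le
      intro l hl
      rcases l with _ | ⟨a, t'⟩
      · simp [jumps]
      · have hsplit := jumps_split F F' h hcorr t' a
        have hj0 : jumps F' (projc h false (a :: t')) ≤ decrease F' :=
          jumps_le_decrease F' (projc_incChain h false hl)
        have hj1 : jumps F' (projc h true (a :: t')) ≤ decrease F' :=
          jumps_le_decrease F' (projc_incChain h true hl)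
        have hc := hchg (a :: t') hl.1
        -- arithmetic
        obtain ⟨q, hq⟩ : ∃ q, 2 ^ (t - 1) = q + 1 :=
          ⟨2 ^ (t - 1) - 1, by have := Nat.one_le_two_pow (n := t - 1); omega⟩
        have hpow : 2 ^ t = 2 * 2 ^ (t - 1) := by
          conv_lhs => rw [show t = (t - 1) + 1 by omega]
          rw [pow_succ]
          ring
        have hDq : decrease F' ≤ (2 * r + 1) * q := by
          rw [hq] at hD
          simpa using hD
        have hgoal : (2 * r + 1) * (2 ^ t - 1) = 2 * ((2 * r + 1) * q) + (2 * r + 1) := by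
          have h2t : 2 ^ t - 1 = 2 * q + 1 := by omega
          rw [h2t]
          ring
        rw [hgoal]
        omega
    · -- base case: no non-monotone gates
      rw [Finset.not_nonempty_iff_eq_empty] at hne
      have hmono : ∀ f ∈ F, Monotone f := by
        intro f hf
        obtain ⟨o, ho, hfo⟩ := hC f hf
        have : Monotone (fun x => C.wire x o) := by
          refine wire_mono C (n + C.size) ?_ o ho
          intro i _
          apply C.mono_ok
          simp [hne]
        intro x y hxy
        rw [hfo x, hfo y]
        exact this hxy
      have : decrease F ≤ 0 :=
        decrease_le F (fun l hl => le_of_eq (jumps_eq_zero_of_monotone F hmono l hl.1))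
      omega

end Main

/-- Lemma 1: if each non-monotone basis function `ω` satisfies
`d(ω) ≤ r`, then any system `F` computed by a circuit with `t` non-monotone
gates satisfies `d(F) ≤ (2r+1)(2^t − 1)`. -/
theorem stmt12 (n r t : ℕ) (Ω : Set (Σ m : ℕ, (Fin m → Bool) → Bool))
    (hΩ : ∀ ω ∈ Ω, ¬ Monotone ω.2 ∧ decrease1 ω.2 ≤ r)
    (F : Finset ((Fin n → Bool) → Bool)) (C : Circuit n Ω)
    (hC : C.Computes F) (ht : C.nonmono.card = t) :
    decrease F ≤ (2 * r + 1) * (2 ^ t - 1) := by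
  exact main_aux r Ω hΩ t n F C hC ht
end
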